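/- Let P be an orthogonal projection on a Hilbert space and let Q be a self-adjoint operator satisfying -P ≤ Q ≤ 1 - P. Then (Q+P)² ≤ Q + P, and consequently Q² ≤ P⊥QP⊥ - PQP, where P⊥ = 1 - P. -/
import Mathlib


/-- If `P` is an orthogonal projection and `Q` is self-adjoint with `-P ≤ Q ≤ 1 - P`, then
`(Q+P)² ≤ Q+P`, and consequently `Q² ≤ P⊥ Q P⊥ - P Q P` with `P⊥ = 1 - P`. -/
theorem stmt6 {E : Type*} [NormedAddCommGroup E] [InnerProductSpace ℂ E] [CompleteSpace E]
    (P Q : E →L[ℂ] E) (hP : IsSelfAdjoint P) (hProj : P * P = P) (hQ : IsSelfAdjoint Q)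
    (h1 : (Q + P).IsPositive) (h2 : (1 - P - Q).IsPositive) :
    ((Q + P) - (Q + P) * (Q + P)).IsPositive ∧
      (((1 - P) * Q * (1 - P) - P * Q * P) - Q * Q).IsPositive := by
  set A := Q + P with hA
  set B := (1 : E →L[ℂ] E) - P - Q with hB
  have hAsa : IsSelfAdjoint A := hQ.add hP
  have hBsa : IsSelfAdjoint B := ((IsSelfAdjoint.one _).sub hP).sub hQ
  have key : (A - A * A).IsPositive := by
    have k1 := h2.conj_adjoint A
    have k2 := h1.conj_adjoint B
    have hAadj : ContinuousLinearMap.adjoint A = A := hAsa.adjoint_eq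
    have hBadj : ContinuousLinearMap.adjoint B = B := hBsa.adjoint_eq
    have := k1.add k2
    have e : A ∘L B ∘L ContinuousLinearMap.adjoint A + B ∘L A ∘L ContinuousLinearMap.adjoint B
        = A - A * A := by
      rw [hAadj, hBadj]
      simp only [← ContinuousLinearMap.mul_def, hB, hA]
      noncomm_ring
    rwa [e] at this
  refine ⟨key, ?_⟩
  have e2 : ((1 - P) * Q * (1 - P) - P * Q * P) - Q * Q = A - A * A := by
    have : A * A = Q * Q + Q * P + P * Q + P * P := by rw [hA]; noncomm_ring
    rw [this, hProj, hA]
    noncomm_ring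
  rwa [e2]
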